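/- Let a₁,…,a_k be positive integers with gcd(a₁,…,a_k)=1, let λ ∈ ℂ with λ ≠ 0 and λ^{a₁} ≠ 1, and let μ be a positive integer. Then s_μ^{(λ)}(a₁,…,a_k) = Σ_{n=0}^{μ} ((−a₁)^n/(λ^{a₁}−1)^{n+1})·C(μ,n)·Σ_{j=0}^{n} ⟨n, n−j⟩ λ^{j a₁} · Σ_{i=0}^{a₁−1} m_i^{μ−n} λ^{m_i} + ((−1)^{μ+1}/(λ−1)^{μ+1})·Σ_{j=0}^{μ} ⟨μ, μ−j⟩ λ^{j}, where the convention 0⁰ = 1 is used (so the i = 0 term m₀^{μ−n} λ^{m₀} equals 1 when n = μ). -/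

import Mathlib

open Finset

/-- `n` is representable as a nonnegative integer combination of the `a i`. -/
def Representable {k : ℕ} (a : Fin k → ℕ) (n : ℕ) : Prop :=
  ∃ x : Fin k → ℕ, n = ∑ i, x i * a i

/-- The set of positive integers that are not representable. -/
def NRset {k : ℕ} (a : Fin k → ℕ) : Set ℕ :=
  {n | 0 < n ∧ ¬ Representable a n}

/-- Eulerian numbers `⟨n,m⟩ = Σ_{k=0}^{m} (−1)^k C(n+1,k)(m−k+1)^n`. -/
def eulerianNum (n m : ℕ) : ℤ :=
  ∑ k ∈ Finset.range (m + 1), (-1 : ℤ) ^ k * ((n + 1).choose k : ℤ) * ((m - k + 1 : ℕ) : ℤ) ^ n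

theorem altsum_zero {R : Type*} [CommRing R] :
    ∀ n : ℕ, ∀ M : ℕ, n < M → ∀ x : R,
      ∑ k ∈ range (M + 1), (-1 : R) ^ k * (M.choose k : R) * (x - k) ^ n = 0 := by
  intro n
  induction n using Nat.strong_induction_on with
  | _ n IH =>
    intro M hnM x
    obtain ⟨M', rfl⟩ : ∃ M', M = M' + 1 := ⟨M - 1, by omega⟩
    have key : ∑ k ∈ range (M' + 1 + 1), (-1 : R) ^ k * ((M' + 1).choose k : R) * (x - k) ^ n
        = ∑ k ∈ range (M' + 1), (-1 : R) ^ k * (M'.choose k : R) * ((x - k) ^ n - (x - 1 - k) ^ n) := by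
      rw [Finset.sum_range_succ' (fun k => (-1 : R) ^ k * ((M' + 1).choose k : R) * (x - k) ^ n) (M' + 1)]
      have h1 : ∀ k, ((M' + 1).choose (k + 1) : R) = (M'.choose k : R) + (M'.choose (k + 1) : R) := by
        intro k; rw [Nat.choose_succ_succ]; push_cast; ring
      have e1 : ∑ k ∈ range (M' + 1), (-1 : R) ^ (k + 1) * ((M' + 1).choose (k + 1) : R) * (x - (k + 1 : ℕ)) ^ n
          = (∑ k ∈ range (M' + 1), (-1 : R) ^ (k + 1) * (M'.choose k : R) * (x - 1 - k) ^ n)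
            + ∑ k ∈ range (M' + 1), (-1 : R) ^ (k + 1) * (M'.choose (k + 1) : R) * (x - (k + 1 : ℕ)) ^ n := by
        rw [← Finset.sum_add_distrib]
        refine Finset.sum_congr rfl fun k hk => ?_
        rw [h1]
        have : x - ((k : R) + 1) = x - 1 - k := by ring
        push_cast
        rw [this]; ring
      rw [e1]
      have e2 : ∑ k ∈ range (M' + 1), (-1 : R) ^ (k + 1) * (M'.choose (k + 1) : R) * (x - (k + 1 : ℕ)) ^ n
          = (∑ k ∈ range (M' + 1 + 1), (-1 : R) ^ k * (M'.choose k : R) * (x - k) ^ n)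
            - (-1 : R) ^ 0 * (M'.choose 0 : R) * (x - (0 : ℕ)) ^ n := by
        rw [Finset.sum_range_succ' (fun k => (-1 : R) ^ k * (M'.choose k : R) * (x - k) ^ n) (M' + 1)]
        ring
      rw [e2]
      have e3 : ∑ k ∈ range (M' + 1 + 1), (-1 : R) ^ k * (M'.choose k : R) * (x - k) ^ n
          = ∑ k ∈ range (M' + 1), (-1 : R) ^ k * (M'.choose k : R) * (x - k) ^ n := by
        rw [Finset.sum_range_succ, Nat.choose_succ_self]
        push_cast; ring
      rw [e3]
      have e4 : ∑ k ∈ range (M' + 1), (-1 : R) ^ k * (M'.choose k : R) * ((x - k) ^ n - (x - 1 - k) ^ n)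
          = (∑ k ∈ range (M' + 1), (-1 : R) ^ k * (M'.choose k : R) * (x - k) ^ n)
            - ∑ k ∈ range (M' + 1), (-1 : R) ^ k * (M'.choose k : R) * (x - 1 - k) ^ n := by
        rw [← Finset.sum_sub_distrib]
        exact Finset.sum_congr rfl fun k _ => by ring
      rw [e4]
      simp only [Nat.choose_zero_right, Nat.cast_zero, Nat.cast_one, pow_zero, one_mul, sub_zero]
      have hA : ∑ k ∈ range (M' + 1), (-1 : R) ^ (k + 1) * (M'.choose k : R) * (x - 1 - k) ^ n
          = -∑ k ∈ range (M' + 1), (-1 : R) ^ k * (M'.choose k : R) * (x - 1 - k) ^ n := by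
        rw [← Finset.sum_neg_distrib]
        exact Finset.sum_congr rfl fun k _ => by ring
      rw [hA]
      push_cast
      ring
    rw [key]
    have expand : ∀ z : R, z ^ n - (z - 1) ^ n
        = -∑ l ∈ range n, ((n.choose l : R) * (-1) ^ (n - l)) * z ^ l := by
      intro z
      have hb : (z - 1) ^ n = ∑ l ∈ range (n + 1), z ^ l * (-1 : R) ^ (n - l) * (n.choose l : R) := by
        have h := add_pow z (-1 : R) n
        rw [sub_eq_add_neg, h]
      rw [hb, Finset.sum_range_succ, Nat.sub_self, pow_zero, Nat.choose_self, Nat.cast_one, mul_one, mul_one]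
      have : ∑ l ∈ range n, z ^ l * (-1 : R) ^ (n - l) * (n.choose l : R)
          = ∑ l ∈ range n, ((n.choose l : R) * (-1) ^ (n - l)) * z ^ l :=
        Finset.sum_congr rfl fun l _ => by ring
      rw [this]; ring
    have hterm : ∀ k : ℕ, (-1 : R) ^ k * (M'.choose k : R) * ((x - k) ^ n - (x - 1 - k) ^ n)
        = ∑ l ∈ range n, (-((n.choose l : R) * (-1) ^ (n - l))) * ((-1) ^ k * (M'.choose k : R) * (x - k) ^ l) := by
      intro k
      have h2 : x - 1 - (k : R) = (x - k) - 1 := by ring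
      rw [h2, expand (x - k), mul_neg, Finset.mul_sum, ← Finset.sum_neg_distrib]
      exact Finset.sum_congr rfl fun l _ => by ring
    rw [Finset.sum_congr rfl fun k _ => hterm k, Finset.sum_comm]
    refine Finset.sum_eq_zero fun l hl => ?_
    rw [← Finset.mul_sum]
    have hM' : ∃ M'', M' = M'' + 1 ∨ True := ⟨0, Or.inr trivial⟩
    have hlM : l < M' := by
      have := Finset.mem_range.mp hl
      omega
    obtain ⟨M'', rfl⟩ : ∃ M'', M' = M'' + 1 := ⟨M' - 1, by omega⟩
    rw [IH l (Finset.mem_range.mp hl) (M'' + 1) hlM x, mul_zero]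

lemma neg_one_pow_sub_int (a b : ℕ) (h : b ≤ a) : (-1 : ℤ) ^ (a - b) = (-1) ^ a * (-1) ^ b := by
  have hb : (-1 : ℤ) ^ b * (-1) ^ b = 1 := by
    rw [← pow_add, ← two_mul, pow_mul]; norm_num
  calc (-1 : ℤ) ^ (a - b) = (-1 : ℤ) ^ (a - b) * ((-1) ^ b * (-1) ^ b) := by rw [hb, mul_one]
    _ = ((-1 : ℤ) ^ (a - b) * (-1) ^ b) * (-1) ^ b := by ring
    _ = (-1) ^ a * (-1) ^ b := by rw [← pow_add, Nat.sub_add_cancel h]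

theorem eulerian_eq (n s : ℕ) (h : s ≤ n) :
    ∑ k ∈ range (s + 1), (-1 : ℤ) ^ k * ((n + 1).choose k : ℤ) * ((s - k : ℕ) : ℤ) ^ n
      = eulerianNum n (n - s) := by
  have h0 := altsum_zero (R := ℤ) n (n + 1) (Nat.lt_succ_self n) (s : ℤ)
  set f : ℕ → ℤ := fun k => (-1 : ℤ) ^ k * ((n + 1).choose k : ℤ) * ((s : ℤ) - k) ^ n with hf
  have hsplit : ∑ k ∈ range (n + 1 + 1), f k
      = ∑ k ∈ range (s + 1), f k + ∑ k ∈ Ico (s + 1) (n + 2), f k := by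
    rw [Finset.range_eq_Ico, Finset.range_eq_Ico]
    exact (Finset.sum_Ico_consecutive _ (Nat.zero_le _) (by omega)).symm
  have hfirst : ∑ k ∈ range (s + 1), f k
      = ∑ k ∈ range (s + 1), (-1 : ℤ) ^ k * ((n + 1).choose k : ℤ) * ((s - k : ℕ) : ℤ) ^ n := by
    refine Finset.sum_congr rfl fun k hk => ?_
    have hk' : k ≤ s := by have := Finset.mem_range.mp hk; omega
    rw [hf]
    simp only []
    rw [Nat.cast_sub hk']
  have hsecond : ∑ k ∈ Ico (s + 1) (n + 2), f k = -eulerianNum n (n - s) := by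
    rw [Finset.sum_Ico_eq_sum_range]
    have hL : n + 2 - (s + 1) = (n - s) + 1 := by omega
    rw [hL]
    rw [← Finset.sum_range_reflect (fun l => f (s + 1 + l)) ((n - s) + 1)]
    rw [eulerianNum, ← Finset.sum_neg_distrib]
    refine Finset.sum_congr rfl fun j hj => ?_
    have hj' : j ≤ n - s := by have := Finset.mem_range.mp hj; omega
    have harg : s + 1 + ((n - s) + 1 - 1 - j) = n + 1 - j := by omega
    rw [harg, hf]
    simp only []
    have h1 : ((n + 1).choose (n + 1 - j) : ℤ) = ((n + 1).choose j : ℤ) := by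
      rw [Nat.choose_symm (by omega)]
    have h2 : (-1 : ℤ) ^ (n + 1 - j) = (-1) ^ (n + 1) * (-1) ^ j :=
      neg_one_pow_sub_int (n + 1) j (by omega)
    have h3 : ((s : ℤ) - ((n + 1 - j : ℕ) : ℤ)) = -(((n - s - j + 1 : ℕ) : ℤ)) := by
      push_cast [Nat.cast_sub (show j ≤ n + 1 by omega), Nat.cast_sub (show j ≤ n - s by omega),
        Nat.cast_sub (show s ≤ n by omega)]
      ring
    rw [h1, h2, h3, neg_pow (((n - s - j + 1 : ℕ) : ℤ)) n]
    have hsign : (-1 : ℤ) ^ (n + 1) * (-1) ^ n = -1 := by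
      rw [← pow_add, show n + 1 + n = 2 * n + 1 from by omega, pow_succ, pow_mul]
      norm_num
    linear_combination ((-1 : ℤ) ^ j * (((n + 1).choose j : ℕ) : ℤ) * (((n - s - j + 1 : ℕ) : ℤ)) ^ n) * hsign
  have := h0
  rw [hsplit] at this
  rw [hfirst] at this
  rw [hsecond] at this
  linarith

theorem tsum_pow_geom (n : ℕ) (x : ℂ) (hx : ‖x‖ < 1) :
    (∑' t : ℕ, (t : ℂ) ^ n * x ^ t) * (1 - x) ^ (n + 1)
      = ∑ j ∈ range (n + 1), (eulerianNum n (n - j) : ℂ) * x ^ j := by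
  have hs : Summable (fun t : ℕ => (t : ℂ) ^ n * x ^ t) :=
    summable_pow_mul_geometric_of_norm_lt_one n hx
  set H : ℂ := ∑' t : ℕ, (t : ℂ) ^ n * x ^ t with hH
  set g : ℕ → ℕ → ℂ := fun k s =>
    (-1 : ℂ) ^ k * (((n + 1).choose k : ℕ) : ℂ) * ((if k ≤ s then ((s - k : ℕ) : ℂ) ^ n else 0) * x ^ s)
    with hg
  have hxr : ‖(‖x‖)‖ < 1 := by rwa [Real.norm_of_nonneg (norm_nonneg x)]
  have hsr : Summable (fun s : ℕ => (s : ℝ) ^ n * ‖x‖ ^ s) :=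
    summable_pow_mul_geometric_of_norm_lt_one n hxr
  have hgsum : ∀ k, Summable (g k) := by
    intro k
    apply Summable.of_norm_bounded (g := fun s : ℕ => (((n + 1).choose k : ℕ) : ℝ) * ((s : ℝ) ^ n * ‖x‖ ^ s))
      (hsr.mul_left _)
    intro s
    rw [hg]
    simp only []
    rw [norm_mul, norm_mul, norm_mul, norm_pow, norm_pow, norm_neg, norm_one, one_pow, one_mul]
    rw [Complex.norm_natCast]
    by_cases hks : k ≤ s
    · rw [if_pos hks, norm_pow, Complex.norm_natCast]
      have h1 : ((s - k : ℕ) : ℝ) ^ n ≤ (s : ℝ) ^ n := by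
        apply pow_le_pow_left₀ (by positivity)
        exact_mod_cast Nat.sub_le s k
      calc (((n + 1).choose k : ℕ) : ℝ) * (((s - k : ℕ) : ℝ) ^ n * ‖x‖ ^ s)
          ≤ (((n + 1).choose k : ℕ) : ℝ) * ((s : ℝ) ^ n * ‖x‖ ^ s) := by
            apply mul_le_mul_of_nonneg_left _ (by positivity)
            apply mul_le_mul_of_nonneg_right h1 (by positivity)
        _ = _ := rfl
    · rw [if_neg hks, norm_zero, zero_mul, mul_zero]
      positivity
  have hcol : ∀ k, ∑' s : ℕ, g k s
      = (-1 : ℂ) ^ k * (((n + 1).choose k : ℕ) : ℂ) * (x ^ k * H) := by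
    intro k
    rw [hg]
    simp only []
    rw [tsum_mul_left]
    congr 1
    have hinj : Function.Injective (fun t : ℕ => t + k) := add_left_injective k
    rw [← Function.Injective.tsum_eq hinj]
    · have : ∀ t : ℕ, (if k ≤ t + k then ((t + k - k : ℕ) : ℂ) ^ n else 0) * x ^ (t + k)
          = x ^ k * ((t : ℂ) ^ n * x ^ t) := by
        intro t
        rw [if_pos (by omega), Nat.add_sub_cancel, pow_add]
        ring
      rw [tsum_congr this, tsum_mul_left]
    · intro s hs'
      by_cases h0 : k ≤ s
      · exact ⟨s - k, by show s - k + k = s; omega⟩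
      · exfalso
        apply Function.mem_support.mp hs'
        simp [h0]
  have hswap : ∑ k ∈ range (n + 2), ∑' s : ℕ, g k s = ∑' s : ℕ, ∑ k ∈ range (n + 2), g k s :=
    (Summable.tsum_finsetSum (fun k _ => hgsum k)).symm
  have hcolsum : ∀ s : ℕ, ∑ k ∈ range (n + 2), g k s
      = if s ≤ n then (eulerianNum n (n - s) : ℂ) * x ^ s else 0 := by
    intro s
    by_cases hsn : s ≤ n
    · rw [if_pos hsn]
      have hsplit : range (n + 2) = range (s + 1) ∪ Ico (s + 1) (n + 2) := by
        rw [Finset.range_eq_Ico, Finset.range_eq_Ico]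
        rw [Finset.Ico_union_Ico_eq_Ico (Nat.zero_le _) (by omega)]
      rw [hsplit, Finset.sum_union (by
        rw [Finset.range_eq_Ico]
        exact Finset.Ico_disjoint_Ico_consecutive 0 (s+1) (n+2))]
      have hIco : ∑ k ∈ Ico (s + 1) (n + 2), g k s = 0 := by
        apply Finset.sum_eq_zero
        intro k hk
        have : ¬ (k ≤ s) := by have := Finset.mem_Ico.mp hk; omega
        simp [hg, this]
      rw [hIco, add_zero]
      have : ∑ k ∈ range (s + 1), g k s
          = (∑ k ∈ range (s + 1), (-1 : ℂ) ^ k * (((n + 1).choose k : ℕ) : ℂ) * ((s - k : ℕ) : ℂ) ^ n) * x ^ s := by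
        rw [Finset.sum_mul]
        refine Finset.sum_congr rfl fun k hk => ?_
        have hks : k ≤ s := by have := Finset.mem_range.mp hk; omega
        simp [hg, hks]
        ring
      rw [this]
      congr 1
      have := eulerian_eq n s hsn
      exact_mod_cast congrArg (fun z : ℤ => (z : ℂ)) this
    · rw [if_neg hsn]
      have hsn' : n + 1 ≤ s := by omega
      have : ∑ k ∈ range (n + 2), g k s
          = (∑ k ∈ range (n + 2), (-1 : ℂ) ^ k * (((n + 1).choose k : ℕ) : ℂ) * (((s : ℂ)) - k) ^ n) * x ^ s := by
        rw [Finset.sum_mul]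
        refine Finset.sum_congr rfl fun k hk => ?_
        have hks : k ≤ s := by have := Finset.mem_range.mp hk; omega
        simp only [hg, if_pos hks]
        rw [Nat.cast_sub hks]
        push_cast
        ring
      rw [this, altsum_zero n (n + 1) (Nat.lt_succ_self n) ((s : ℂ))]
      exact zero_mul _
  have hfin : ∑' s : ℕ, ∑ k ∈ range (n + 2), g k s
      = ∑ j ∈ range (n + 1), (eulerianNum n (n - j) : ℂ) * x ^ j := by
    rw [tsum_congr hcolsum]
    rw [tsum_eq_sum (s := range (n + 1)) (by
      intro b hb
      have hbn : ¬ (b ≤ n) := fun h => hb (Finset.mem_range.mpr (by omega))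
      simp [hbn])]
    refine Finset.sum_congr rfl fun j hj => ?_
    have : j ≤ n := by have := Finset.mem_range.mp hj; omega
    simp [this]
  have hexp : (1 - x) ^ (n + 1) = ∑ k ∈ range (n + 2), (-1 : ℂ) ^ k * (((n + 1).choose k : ℕ) : ℂ) * x ^ k := by
    have h := add_pow (-x) (1 : ℂ) (n + 1)
    rw [show (1 : ℂ) - x = -x + 1 from by ring, h]
    refine Finset.sum_congr rfl fun k hk => ?_
    rw [neg_pow]
    ring
  rw [hexp, Finset.mul_sum]
  rw [show ∑ k ∈ range (n + 2), H * ((-1 : ℂ) ^ k * (((n + 1).choose k : ℕ) : ℂ) * x ^ k)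
      = ∑ k ∈ range (n + 2), ∑' s : ℕ, g k s from
    Finset.sum_congr rfl fun k _ => by rw [hcol]; ring]
  rw [hswap, hfin]

noncomputable def Epoly (n : ℕ) (x : ℂ) : ℂ :=
  ∑ j ∈ range (n + 1), (eulerianNum n (n - j) : ℂ) * x ^ j

noncomputable def Mterm (m : ℕ → ℕ) (a0 μ n : ℕ) (lam : ℂ) : ℂ :=
  ∑ i ∈ range a0, ((m i : ℕ) : ℂ) ^ (μ - n) * lam ^ (m i)

noncomputable def Tbig (m : ℕ → ℕ) (a0 μ : ℕ) (lam : ℂ) : ℂ :=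
  (∑ n ∈ range (μ + 1), (-(a0 : ℂ)) ^ n * (lam ^ a0 - 1) ^ (μ - n) * (μ.choose n : ℂ)
      * Epoly n (lam ^ a0) * Mterm m a0 μ n lam) * (lam - 1) ^ (μ + 1)
    + (-1 : ℂ) ^ (μ + 1) * (lam ^ a0 - 1) ^ (μ + 1) * Epoly μ lam

noncomputable def Sfin (m : ℕ → ℕ) (a0 μ : ℕ) (lam : ℂ) : ℂ :=
  ∑ n ∈ (range (∑ i ∈ range a0, m i)).filter (fun n => 0 < n ∧ n < m (n % a0)),
    lam ^ n * (n : ℂ) ^ μ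

theorem core_analytic (a0 : ℕ) (ha0 : 0 < a0) (m : ℕ → ℕ) (hm0 : m 0 = 0)
    (hmod : ∀ i < a0, m i % a0 = i) (μ : ℕ) (lam : ℂ) (hlam : ‖lam‖ < 1) :
    Sfin m a0 μ lam * ((lam ^ a0 - 1) ^ (μ + 1) * (lam - 1) ^ (μ + 1))
      = Tbig m a0 μ lam := by
  haveI : NeZero a0 := ⟨by omega⟩
  set y : ℂ := lam ^ a0 with hy
  have hyn : ‖y‖ < 1 := by
    rw [hy, norm_pow]
    exact pow_lt_one₀ (norm_nonneg _) hlam (by omega)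
  set Hn : ℕ → ℂ := fun n => ∑' t : ℕ, (t : ℂ) ^ n * y ^ t with hHn
  have hHnsum : ∀ n, Summable (fun t : ℕ => (t : ℂ) ^ n * y ^ t) := fun n =>
    summable_pow_mul_geometric_of_norm_lt_one n hyn
  set F : ℕ → ℕ → ℂ := fun x t => lam ^ (x + a0 * t) * ((x + a0 * t : ℕ) : ℂ) ^ μ with hF
  have hfun : ∀ x t : ℕ, F x t
      = ∑ n ∈ range (μ + 1),
          (lam ^ x * ((μ.choose n : ℂ) * (x : ℂ) ^ (μ - n) * (a0 : ℂ) ^ n)) * ((t : ℂ) ^ n * y ^ t) := by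
    intro x t
    rw [hF]
    simp only []
    have h1 : lam ^ (x + a0 * t) = lam ^ x * y ^ t := by rw [hy, pow_add, pow_mul]
    have h2 : ((x + a0 * t : ℕ) : ℂ) ^ μ
        = ∑ n ∈ range (μ + 1), ((a0 : ℂ) * t) ^ n * (x : ℂ) ^ (μ - n) * (μ.choose n : ℂ) := by
      push_cast
      rw [add_comm ((x : ℂ)) _]
      exact add_pow ((a0 : ℂ) * t) (x : ℂ) μ
    rw [h1, h2, Finset.mul_sum]
    refine Finset.sum_congr rfl fun n hn => ?_
    rw [mul_pow]
    ring
  have hFsum : ∀ x, Summable (F x) := fun x =>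
    (summable_sum (fun n _ => ((hHnsum n).mul_left _))).congr (fun t => (hfun x t).symm)
  have hrep : ∀ x : ℕ, ∑' t : ℕ, F x t
      = lam ^ x * ∑ n ∈ range (μ + 1), (μ.choose n : ℂ) * (x : ℂ) ^ (μ - n) * (a0 : ℂ) ^ n * Hn n := by
    intro x
    rw [tsum_congr (hfun x), Summable.tsum_finsetSum (fun n _ => (hHnsum n).mul_left _), Finset.mul_sum]
    refine Finset.sum_congr rfl fun n _ => ?_
    rw [tsum_mul_left]
    ring
  set W : ℕ → ℂ := fun x => -∑' t : ℕ, F x t with hW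
  have hWstep : ∀ x, W (x + a0) = W x + lam ^ x * (x : ℂ) ^ μ := by
    intro x
    rw [hW]
    simp only []
    have h1 : ∀ t, F (x + a0) t = F x (t + 1) := by
      intro t
      rw [hF]
      simp only []
      have harg : x + a0 + a0 * t = x + a0 * (t + 1) := by ring
      rw [harg]
    have h2 : ∑' t : ℕ, F x (t + 1) = (∑' t : ℕ, F x t) - F x 0 := by
      rw [Summable.tsum_eq_zero_add (hFsum x)]
      ring
    have h3 : F x 0 = lam ^ x * (x : ℂ) ^ μ := by
      rw [hF]
      simp
    rw [tsum_congr h1, h2, h3]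
    ring
  have htel : ∀ i q : ℕ, ∑ t ∈ range q, F i t = W (i + a0 * q) - W i := by
    intro i q
    have h0 : W (i + a0 * 0) = W i := by norm_num
    rw [← h0, ← Finset.sum_range_sub (fun t => W (i + a0 * t)) q]
    refine Finset.sum_congr rfl fun t ht => ?_
    have harg : i + a0 * (t + 1) = (i + a0 * t) + a0 := by ring
    rw [harg, hWstep (i + a0 * t)]
    ring
  have hfsummable : Summable (fun n : ℕ => lam ^ n * (n : ℂ) ^ μ) :=
    (summable_pow_mul_geometric_of_norm_lt_one μ hlam).congr (fun n => by ring)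
  set HL : ℂ := ∑' n : ℕ, lam ^ n * (n : ℂ) ^ μ with hHL
  set f : ℕ → ℂ := fun n => lam ^ n * (n : ℂ) ^ μ with hf
  have hWsum : ∑ i ∈ range a0, W i = -HL := by
    have hsymm : ∀ p : ℕ × Fin a0, (Nat.divModEquiv a0).symm p = p.1 * a0 + (p.2 : ℕ) := fun p => rfl
    have hsum2 : Summable (fun p : ℕ × Fin a0 => f (p.1 * a0 + (p.2 : ℕ))) := by
      have := (Equiv.summable_iff (Nat.divModEquiv a0).symm).mpr hfsummable
      exact this.congr fun p => by rw [← hsymm p]; rfl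
    have h1 : HL = ∑' p : ℕ × Fin a0, f (p.1 * a0 + (p.2 : ℕ)) := by
      rw [hHL, ← ((Nat.divModEquiv a0).symm.tsum_eq f)]
      exact (tsum_congr fun p => by rw [hsymm p]).symm
    have h2 : ∀ (i : Fin a0), Summable (fun t : ℕ => f (t * a0 + (i : ℕ))) := by
      intro i
      refine (hFsum (i : ℕ)).congr fun t => ?_
      rw [hF, hf]
      simp only []
      have : (i : ℕ) + a0 * t = t * a0 + (i : ℕ) := by ring
      rw [this]
    have h3 : HL = ∑ i ∈ range a0, ∑' t : ℕ, F i t := by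
      rw [h1, Summable.tsum_prod' hsum2 (fun b => Summable.of_finite)]
      have h4 : ∀ t : ℕ, ∑' i : Fin a0, f (t * a0 + (i : ℕ)) = ∑ i : Fin a0, f (t * a0 + (i : ℕ)) :=
        fun t => tsum_fintype _
      rw [tsum_congr h4, Summable.tsum_finsetSum (fun i _ => h2 i)]
      have h5 : ∀ i : Fin a0, ∑' t : ℕ, f (t * a0 + (i : ℕ)) = ∑' t : ℕ, F (i : ℕ) t := by
        intro i
        refine tsum_congr fun t => ?_
        rw [hF, hf]
        simp only []
        have : (i : ℕ) + a0 * t = t * a0 + (i : ℕ) := by ring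
        rw [this]
      rw [Finset.sum_congr rfl (fun i _ => h5 i)]
      exact (Fin.sum_univ_eq_sum_range (fun i => ∑' t : ℕ, F i t) a0)
    rw [h3, hW, ← Finset.sum_neg_distrib]
  -- decomposition of Sfin
  have hdec : Sfin m a0 μ lam = ∑ i ∈ range a0, ∑ t ∈ range (m i / a0), F i t := by
    rw [Sfin, Finset.sum_sigma' (range a0) (fun i => range (m i / a0)) F]
    refine Finset.sum_bij' (i := fun n _ => (⟨n % a0, n / a0⟩ : (_ : ℕ) × ℕ))
      (j := fun p _ => p.1 + a0 * p.2) ?_ ?_ ?_ ?_ ?_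
    · -- hi
      intro n hn
      rw [Finset.mem_filter] at hn
      obtain ⟨-, hpos, hlt⟩ := hn
      rw [Finset.mem_sigma, Finset.mem_range, Finset.mem_range]
      have hmlt : n % a0 < a0 := Nat.mod_lt n ha0
      refine ⟨hmlt, ?_⟩
      have e1 : a0 * (n / a0) + n % a0 = n := Nat.div_add_mod n a0
      have e2 : a0 * (m (n % a0) / a0) + m (n % a0) % a0 = m (n % a0) := Nat.div_add_mod _ a0
      have e3 : m (n % a0) % a0 = n % a0 := hmod _ hmlt
      have ha0' : 0 < a0 := ha0
      -- from n < m (n%a0): a0*(n/a0) < a0*(m../a0)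
      have : a0 * (n / a0) < a0 * (m (n % a0) / a0) := by omega
      exact Nat.lt_of_mul_lt_mul_left this
    · -- hj
      intro p hp
      rw [Finset.mem_sigma, Finset.mem_range, Finset.mem_range] at hp
      obtain ⟨hp1, hp2⟩ := hp
      simp only [Finset.mem_filter, Finset.mem_range]
      have hmodp : (p.1 + a0 * p.2) % a0 = p.1 := by
        rw [Nat.add_mul_mod_self_left, Nat.mod_eq_of_lt hp1]
      have e2 : a0 * (m p.1 / a0) + m p.1 % a0 = m p.1 := Nat.div_add_mod _ a0
      have e3 : m p.1 % a0 = p.1 := hmod _ hp1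
      have hlt : p.1 + a0 * p.2 < m p.1 := by
        have : p.2 + 1 ≤ m p.1 / a0 := hp2
        nlinarith [Nat.mul_le_mul_left a0 this]
      have hposp : 0 < p.1 + a0 * p.2 := by
        rcases Nat.eq_zero_or_pos p.1 with h0 | h0
        · exfalso
          rw [h0, hm0] at hp2
          simp at hp2
        · omega
      have hbound : m p.1 ≤ ∑ i ∈ range a0, m i :=
        Finset.single_le_sum (f := m) (fun i _ => Nat.zero_le _) (Finset.mem_range.mpr hp1)
      rw [hmodp]
      refine ⟨by omega, hposp, hlt⟩
    · -- left inverse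
      intro n hn
      have : n % a0 + a0 * (n / a0) = n := Nat.mod_add_div n a0
      simpa using this
    · -- right inverse
      intro p hp
      rw [Finset.mem_sigma, Finset.mem_range, Finset.mem_range] at hp
      obtain ⟨hp1, hp2⟩ := hp
      have hmodp : (p.1 + a0 * p.2) % a0 = p.1 := by
        rw [Nat.add_mul_mod_self_left, Nat.mod_eq_of_lt hp1]
      have hdivp : (p.1 + a0 * p.2) / a0 = p.2 := by
        rw [Nat.add_mul_div_left _ _ ha0, Nat.div_eq_of_lt hp1, zero_add]
      obtain ⟨p1, p2⟩ := p
      show (⟨(p1 + a0 * p2) % a0, (p1 + a0 * p2) / a0⟩ : (_ : ℕ) × ℕ) = ⟨p1, p2⟩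
      rw [hmodp, hdivp]
    · -- values
      intro n hn
      rw [hF]
      simp only []
      have : n % a0 + a0 * (n / a0) = n := Nat.mod_add_div n a0
      rw [this]
  -- main computation
  have hmain : Sfin m a0 μ lam
      = -(∑ n ∈ range (μ + 1), (μ.choose n : ℂ) * (a0 : ℂ) ^ n * Hn n * Mterm m a0 μ n lam) + HL := by
    rw [hdec]
    have h1 : ∀ i ∈ range a0, ∑ t ∈ range (m i / a0), F i t = W (m i) - W i := by
      intro i hi
      rw [htel i (m i / a0)]
      have hi' : i < a0 := Finset.mem_range.mp hi
      have : i + a0 * (m i / a0) = m i := by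
        have e1 : m i % a0 + a0 * (m i / a0) = m i := Nat.mod_add_div (m i) a0
        rw [hmod i hi'] at e1
        exact e1
      rw [this]
    rw [Finset.sum_congr rfl h1, Finset.sum_sub_distrib, hWsum]
    have h3 : ∀ i : ℕ, W (m i)
        = -∑ n ∈ range (μ + 1), (μ.choose n : ℂ) * (a0 : ℂ) ^ n * Hn n * (((m i : ℕ) : ℂ) ^ (μ - n) * lam ^ (m i)) := by
      intro i
      rw [hW]
      simp only []
      rw [hrep (m i), Finset.mul_sum, ← Finset.sum_neg_distrib, ← Finset.sum_neg_distrib]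
      exact Finset.sum_congr rfl fun n _ => by ring
    rw [Finset.sum_congr rfl (fun i _ => h3 i), Finset.sum_neg_distrib, Finset.sum_comm]
    have h4 : ∀ n ∈ range (μ + 1),
        ∑ i ∈ range a0, (μ.choose n : ℂ) * (a0 : ℂ) ^ n * Hn n * (((m i : ℕ) : ℂ) ^ (μ - n) * lam ^ (m i))
          = (μ.choose n : ℂ) * (a0 : ℂ) ^ n * Hn n * Mterm m a0 μ n lam := by
      intro n _
      rw [Mterm, Finset.mul_sum]
    rw [Finset.sum_congr rfl h4]
    ring
  -- multiply through
  have hHL1 : HL * (lam - 1) ^ (μ + 1) = (-1 : ℂ) ^ (μ + 1) * Epoly μ lam := by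
    have hkey := tsum_pow_geom μ lam hlam
    have h1 : HL = ∑' t : ℕ, (t : ℂ) ^ μ * lam ^ t := tsum_congr fun t => by ring
    have h2 : (lam - 1) ^ (μ + 1) = (-1 : ℂ) ^ (μ + 1) * (1 - lam) ^ (μ + 1) := by
      rw [show lam - 1 = -(1 - lam) from by ring, neg_pow]
    rw [h1, h2, Epoly, ← hkey]
    ring
  have hHn1 : ∀ n, n ≤ μ → Hn n * (y - 1) ^ (μ + 1) = (-1 : ℂ) ^ (n + 1) * Epoly n y * (y - 1) ^ (μ - n) := by
    intro n hn
    have hkey := tsum_pow_geom n y hyn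
    have h2 : (y - 1) ^ (n + 1) = (-1 : ℂ) ^ (n + 1) * (1 - y) ^ (n + 1) := by
      rw [show y - 1 = -(1 - y) from by ring, neg_pow]
    have h3 : (y - 1) ^ (μ + 1) = (-1 : ℂ) ^ (n + 1) * (1 - y) ^ (n + 1) * (y - 1) ^ (μ - n) := by
      rw [show μ + 1 = (n + 1) + (μ - n) from by omega, pow_add, h2]
    rw [h3, show Hn n * ((-1 : ℂ) ^ (n + 1) * (1 - y) ^ (n + 1) * (y - 1) ^ (μ - n))
      = (Hn n * (1 - y) ^ (n + 1)) * ((-1 : ℂ) ^ (n + 1) * (y - 1) ^ (μ - n)) from by ring]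
    rw [hHn]
    simp only []
    rw [hkey, Epoly]
    ring
  have hA : (∑ n ∈ range (μ + 1), (μ.choose n : ℂ) * (a0 : ℂ) ^ n * Hn n * Mterm m a0 μ n lam) * (y - 1) ^ (μ + 1)
      = -∑ n ∈ range (μ + 1), (-(a0 : ℂ)) ^ n * (y - 1) ^ (μ - n) * (μ.choose n : ℂ)
          * Epoly n y * Mterm m a0 μ n lam := by
    rw [Finset.sum_mul, ← Finset.sum_neg_distrib]
    refine Finset.sum_congr rfl fun n hn => ?_
    have hnμ : n ≤ μ := by have := Finset.mem_range.mp hn; omega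
    have hh := hHn1 n hnμ
    calc (μ.choose n : ℂ) * (a0 : ℂ) ^ n * Hn n * Mterm m a0 μ n lam * (y - 1) ^ (μ + 1)
        = ((μ.choose n : ℂ) * (a0 : ℂ) ^ n * Mterm m a0 μ n lam) * (Hn n * (y - 1) ^ (μ + 1)) := by ring
      _ = ((μ.choose n : ℂ) * (a0 : ℂ) ^ n * Mterm m a0 μ n lam)
            * ((-1 : ℂ) ^ (n + 1) * Epoly n y * (y - 1) ^ (μ - n)) := by rw [hh]
      _ = -((-(a0 : ℂ)) ^ n * (y - 1) ^ (μ - n) * (μ.choose n : ℂ) * Epoly n y * Mterm m a0 μ n lam) := by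
          rw [neg_pow (a0 : ℂ) n]
          ring
  rw [hmain, Tbig]
  rw [show (-(∑ n ∈ range (μ + 1), (μ.choose n : ℂ) * (a0 : ℂ) ^ n * Hn n * Mterm m a0 μ n lam) + HL)
        * ((lam ^ a0 - 1) ^ (μ + 1) * (lam - 1) ^ (μ + 1))
      = -(((∑ n ∈ range (μ + 1), (μ.choose n : ℂ) * (a0 : ℂ) ^ n * Hn n * Mterm m a0 μ n lam) * (y - 1) ^ (μ + 1))
            * (lam - 1) ^ (μ + 1))
        + (HL * (lam - 1) ^ (μ + 1)) * (y - 1) ^ (μ + 1) from by rw [hy]; ring]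
  rw [hA, hHL1, hy]
  ring

section PolyExt
open Polynomial

noncomputable def pS (m : ℕ → ℕ) (a0 μ : ℕ) : Polynomial ℂ :=
  ∑ n ∈ (range (∑ i ∈ range a0, m i)).filter (fun n => 0 < n ∧ n < m (n % a0)),
    C ((n : ℂ) ^ μ) * X ^ n

noncomputable def pE (n d : ℕ) : Polynomial ℂ :=
  ∑ j ∈ range (n + 1), C ((eulerianNum n (n - j) : ℤ) : ℂ) * X ^ (d * j)

noncomputable def pM (m : ℕ → ℕ) (a0 μ n : ℕ) : Polynomial ℂ :=
  ∑ i ∈ range a0, C (((m i : ℕ) : ℂ) ^ (μ - n)) * X ^ (m i)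

noncomputable def pT (m : ℕ → ℕ) (a0 μ : ℕ) : Polynomial ℂ :=
  (∑ n ∈ range (μ + 1), C ((-(a0 : ℂ)) ^ n * (μ.choose n : ℂ))
      * (X ^ a0 - 1) ^ (μ - n) * pE n a0 * pM m a0 μ n) * (X - 1) ^ (μ + 1)
    + C ((-1 : ℂ) ^ (μ + 1)) * (X ^ a0 - 1) ^ (μ + 1) * pE μ 1

noncomputable def pD (a0 μ : ℕ) : Polynomial ℂ :=
  (X ^ a0 - 1) ^ (μ + 1) * (X - 1) ^ (μ + 1)

lemma pS_eval (m : ℕ → ℕ) (a0 μ : ℕ) (lam : ℂ) : (pS m a0 μ).eval lam = Sfin m a0 μ lam := by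
  rw [pS, Sfin, eval_finset_sum]
  exact Finset.sum_congr rfl fun n _ => by simp [mul_comm]

lemma pE_eval (n d : ℕ) (lam : ℂ) : (pE n d).eval lam = Epoly n (lam ^ d) := by
  rw [pE, Epoly, eval_finset_sum]
  refine Finset.sum_congr rfl fun j _ => ?_
  simp [pow_mul]

lemma pM_eval (m : ℕ → ℕ) (a0 μ n : ℕ) (lam : ℂ) :
    (pM m a0 μ n).eval lam = Mterm m a0 μ n lam := by
  rw [pM, Mterm, eval_finset_sum]
  exact Finset.sum_congr rfl fun i _ => by simp

lemma pT_eval (m : ℕ → ℕ) (a0 μ : ℕ) (lam : ℂ) : (pT m a0 μ).eval lam = Tbig m a0 μ lam := by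
  rw [pT, Tbig]
  simp only [eval_add, eval_mul, eval_pow, eval_sub, eval_one, eval_X, eval_C, eval_finset_sum,
    pE_eval, pM_eval, pow_one]
  congr 1
  congr 1
  exact Finset.sum_congr rfl fun n _ => by ring

lemma pD_eval (a0 μ : ℕ) (lam : ℂ) :
    (pD a0 μ).eval lam = (lam ^ a0 - 1) ^ (μ + 1) * (lam - 1) ^ (μ + 1) := by
  simp [pD]

theorem core_all (a0 : ℕ) (ha0 : 0 < a0) (m : ℕ → ℕ) (hm0 : m 0 = 0)
    (hmod : ∀ i < a0, m i % a0 = i) (μ : ℕ) (lam : ℂ) :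
    Sfin m a0 μ lam * ((lam ^ a0 - 1) ^ (μ + 1) * (lam - 1) ^ (μ + 1))
      = Tbig m a0 μ lam := by
  set p : Polynomial ℂ := pS m a0 μ * pD a0 μ - pT m a0 μ with hp
  have hroot : ∀ c : ℝ, c ∈ Set.Ioo (-1 : ℝ) 1 → p.IsRoot (c : ℂ) := by
    intro c hc
    have hn : ‖((c : ℝ) : ℂ)‖ < 1 := by
      rw [Complex.norm_real, Real.norm_eq_abs, abs_lt]
      exact ⟨hc.1, hc.2⟩
    have := core_analytic a0 ha0 m hm0 hmod μ (c : ℂ) hn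
    rw [Polynomial.IsRoot, hp, eval_sub, eval_mul, pS_eval, pD_eval, pT_eval, this, sub_self]
  have hinf : {x : ℂ | p.IsRoot x}.Infinite := by
    apply Set.Infinite.mono (s := (fun c : ℝ => (c : ℂ)) '' Set.Ioo (-1 : ℝ) 1)
    · rintro x ⟨c, hc, rfl⟩
      exact hroot c hc
    · exact ((Set.infinite_coe_iff.mp (Set.Ioo.infinite (by norm_num))).image
        (Complex.ofReal_injective.injOn))
  have hp0 : p = 0 := Polynomial.eq_zero_of_infinite_isRoot p hinf
  have := congrArg (Polynomial.eval lam) hp0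
  rw [hp, eval_sub, eval_mul, pS_eval, pD_eval, pT_eval, eval_zero, sub_eq_zero] at this
  exact this

end PolyExt

theorem stmt11 {k : ℕ} (a : Fin (k + 1) → ℕ)
    (ha : ∀ i, 0 < a i)
    (hgcd : Finset.univ.gcd a = 1)
    (m : ℕ → ℕ) (hm0 : m 0 = 0)
    (hm : ∀ i ∈ Finset.Icc 1 (a 0 - 1),
      IsLeast {n : ℕ | 0 < n ∧ Representable a n ∧ n % (a 0) = i} (m i))
    (lam : ℂ) (hl0 : lam ≠ 0) (hla : lam ^ (a 0) ≠ 1)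
    (μ : ℕ) (hμ : 0 < μ) :
    ∑ᶠ n ∈ NRset a, lam ^ n * (n : ℂ) ^ μ =
      ∑ n ∈ Finset.range (μ + 1),
          ((-(a 0 : ℂ)) ^ n / (lam ^ (a 0) - 1) ^ (n + 1)) * (μ.choose n : ℂ) *
            (∑ j ∈ Finset.range (n + 1), (eulerianNum n (n - j) : ℂ) * lam ^ (j * a 0)) *
            (∑ i ∈ Finset.range (a 0), (m i : ℂ) ^ (μ - n) * lam ^ (m i))
        + ((-1 : ℂ) ^ (μ + 1) / (lam - 1) ^ (μ + 1)) *
            ∑ j ∈ Finset.range (μ + 1), (eulerianNum μ (μ - j) : ℂ) * lam ^ j := by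
  set a0 := a 0 with ha0def
  have ha0 : 0 < a0 := ha 0
  -- basic facts about m
  have hmem : ∀ i, 0 < i → i < a0 → i ∈ Finset.Icc 1 (a0 - 1) := by
    intro i h1 h2
    rw [Finset.mem_Icc]
    omega
  have hmod : ∀ i < a0, m i % a0 = i := by
    intro i hi
    rcases Nat.eq_zero_or_pos i with h0 | h0
    · rw [h0, hm0, Nat.zero_mod]
    · exact (hm i (hmem i h0 hi)).1.2.2
  have hrepm : ∀ i < a0, Representable a (m i) := by
    intro i hi
    rcases Nat.eq_zero_or_pos i with h0 | h0
    · rw [h0, hm0]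
      exact ⟨fun _ => 0, by simp⟩
    · exact (hm i (hmem i h0 hi)).1.2.1
  have hrep_add : ∀ p t : ℕ, Representable a p → Representable a (p + t * a0) := by
    rintro p t ⟨x, hx⟩
    refine ⟨fun j => x j + if j = 0 then t else 0, ?_⟩
    have h1 : ∑ j, (x j + if j = 0 then t else 0) * a j
        = ∑ j, x j * a j + ∑ j, (if j = (0 : Fin (k + 1)) then t else 0) * a j := by
      rw [← Finset.sum_add_distrib]
      exact Finset.sum_congr rfl fun j _ => by ring
    have h2 : ∑ j, (if j = (0 : Fin (k + 1)) then t else 0) * a j = t * a0 := by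
      rw [ha0def]
      rw [Finset.sum_congr rfl (fun j _ => show (if j = (0 : Fin (k + 1)) then t else 0) * a j
        = if j = (0 : Fin (k + 1)) then t * a j else 0 from by split <;> simp)]
      simp
    rw [h1, h2, ← hx]
  -- characterization
  have hchar : ∀ n : ℕ, 0 < n → (Representable a n ↔ m (n % a0) ≤ n) := by
    intro n hn
    constructor
    · intro hr
      rcases Nat.eq_zero_or_pos (n % a0) with h0 | h0
      · rw [h0, hm0]; exact Nat.zero_le n
      · exact (hm (n % a0) (hmem _ h0 (Nat.mod_lt n ha0))).2 ⟨hn, hr, rfl⟩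
    · intro hle
      have hi : n % a0 < a0 := Nat.mod_lt n ha0
      have h1 : (n - m (n % a0)) % a0 = 0 := by
        exact Nat.sub_mod_eq_zero_of_mod_eq (hmod _ hi).symm
      obtain ⟨t, ht⟩ := Nat.dvd_of_mod_eq_zero h1
      rw [mul_comm] at ht
      have hn' : n = m (n % a0) + t * a0 := by omega
      rw [hn']
      exact hrep_add _ t (hrepm _ hi)
  -- set equality
  have hset : NRset a = ↑((range (∑ i ∈ range a0, m i)).filter (fun n => 0 < n ∧ n < m (n % a0))) := by
    ext n
    simp only [NRset, Set.mem_setOf_eq, Finset.coe_filter, Finset.mem_range]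
    constructor
    · rintro ⟨hn, hnr⟩
      have hlt : n < m (n % a0) := by
        by_contra hc
        exact hnr ((hchar n hn).mpr (by omega))
      have hbound : m (n % a0) ≤ ∑ i ∈ range a0, m i :=
        Finset.single_le_sum (f := m) (fun i _ => Nat.zero_le _)
          (Finset.mem_range.mpr (Nat.mod_lt n ha0))
      exact ⟨by omega, hn, hlt⟩
    · rintro ⟨hB, hn, hlt⟩
      refine ⟨hn, fun hr => ?_⟩
      have := (hchar n hn).mp hr
      omega
  have hfin : ∑ᶠ n ∈ NRset a, lam ^ n * (n : ℂ) ^ μ = Sfin m a0 μ lam := by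
    rw [hset, finsum_mem_coe_finset, Sfin]
  -- nonvanishing
  have hy1 : lam ^ a0 - 1 ≠ 0 := sub_ne_zero.mpr hla
  have hl1 : lam - 1 ≠ 0 := by
    intro h
    apply hla
    rw [sub_eq_zero.mp h]
    exact one_pow a0
  have hD : (lam ^ a0 - 1) ^ (μ + 1) * (lam - 1) ^ (μ + 1) ≠ 0 :=
    mul_ne_zero (pow_ne_zero _ hy1) (pow_ne_zero _ hl1)
  have hcore := core_all a0 ha0 m hm0 hmod μ lam
  rw [hfin]
  -- show RHS * D = Tbig, then cancel
  set R : ℂ :=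
      ∑ n ∈ Finset.range (μ + 1),
          ((-(a0 : ℂ)) ^ n / (lam ^ a0 - 1) ^ (n + 1)) * (μ.choose n : ℂ) *
            (∑ j ∈ Finset.range (n + 1), (eulerianNum n (n - j) : ℂ) * lam ^ (j * a0)) *
            (∑ i ∈ Finset.range a0, (m i : ℂ) ^ (μ - n) * lam ^ (m i))
        + ((-1 : ℂ) ^ (μ + 1) / (lam - 1) ^ (μ + 1)) *
            ∑ j ∈ Finset.range (μ + 1), (eulerianNum μ (μ - j) : ℂ) * lam ^ j with hR
  have hRD : R * ((lam ^ a0 - 1) ^ (μ + 1) * (lam - 1) ^ (μ + 1)) = Tbig m a0 μ lam := by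
    rw [hR, Tbig]
    have hE : ∀ n : ℕ, (∑ j ∈ Finset.range (n + 1), (eulerianNum n (n - j) : ℂ) * lam ^ (j * a0))
        = Epoly n (lam ^ a0) := by
      intro n
      rw [Epoly]
      exact Finset.sum_congr rfl fun j _ => by rw [← pow_mul, mul_comm a0 j]
    have hE2 : (∑ j ∈ Finset.range (μ + 1), (eulerianNum μ (μ - j) : ℂ) * lam ^ j) = Epoly μ lam := rfl
    have hM : ∀ n : ℕ, (∑ i ∈ Finset.range a0, (m i : ℂ) ^ (μ - n) * lam ^ (m i)) = Mterm m a0 μ n lam :=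
      fun n => rfl
    simp only [hE, hE2, hM]
    rw [add_mul, Finset.sum_mul, Finset.sum_mul]
    congr 1
    · refine Finset.sum_congr rfl fun n hn => ?_
      have hnμ : n ≤ μ := by have := Finset.mem_range.mp hn; omega
      have hsplit : (lam ^ a0 - 1) ^ (μ + 1) = (lam ^ a0 - 1) ^ (n + 1) * (lam ^ a0 - 1) ^ (μ - n) := by
        rw [← pow_add]
        congr 1
        omega
      field_simp
      rw [hsplit]
      ring
    · field_simp
  calc Sfin m a0 μ lam
      = Sfin m a0 μ lam * ((lam ^ a0 - 1) ^ (μ + 1) * (lam - 1) ^ (μ + 1))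
        / ((lam ^ a0 - 1) ^ (μ + 1) * (lam - 1) ^ (μ + 1)) := by
        rw [mul_div_cancel_right₀ _ hD]
    _ = Tbig m a0 μ lam / ((lam ^ a0 - 1) ^ (μ + 1) * (lam - 1) ^ (μ + 1)) := by rw [hcore]
    _ = R := by rw [← hRD, mul_div_cancel_right₀ _ hD]
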